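/- The number of 312-avoiding permutations in the symmetric group S_n equals the Catalan number C_n = (1/(n+1)) · binom(2n, n). -/

import Mathlib

set_option maxHeartbeats 1000000

/-- A permutation `σ ∈ S_n` is 312-avoiding if there are no indices `a < b < c`
with `σ(a) > σ(c) > σ(b)`. -/
def Avoids312 {n : ℕ} (σ : Equiv.Perm (Fin n)) : Prop :=
  ∀ a b c : Fin n, a < b → b < c → ¬(σ b < σ c ∧ σ c < σ a)

open Equiv Finset

instance avoidsDec {n : ℕ} : DecidablePred (@Avoids312 n) := fun σ => by
  unfold Avoids312; infer_instance

namespace Avoids312Aux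

variable {n : ℕ} {σ : Equiv.Perm (Fin (n + 1))} {i : Fin (n + 1)}

lemma split_lt (h : Avoids312 σ) (hi : σ i = 0) {a c : Fin (n + 1)}
    (ha : a < i) (hc : i < c) : σ a < σ c := by
  have hc0 : σ c ≠ 0 := fun e => absurd (σ.injective (e.trans hi.symm)) hc.ne'
  have h2 : σ i < σ c := by rw [hi]; exact Fin.pos_iff_ne_zero.mpr hc0
  have h3 : ¬ σ c < σ a := fun hlt => h a i c ha hc ⟨h2, hlt⟩
  exact lt_of_le_of_ne (not_lt.mp h3) fun e => absurd (σ.injective e) (ha.trans hc).ne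

lemma val_pos (hi : σ i = 0) {a : Fin (n + 1)} (ha : a < i) : 1 ≤ (σ a).val := by
  have h0 : σ a ≠ 0 := fun e => absurd (σ.injective (e.trans hi.symm)) ha.ne
  have : (σ a).val ≠ 0 := fun e => h0 (Fin.ext (by simpa using e))
  omega

lemma val_le_of_lt (h : Avoids312 σ) (hi : σ i = 0) {a : Fin (n + 1)}
    (ha : a < i) : (σ a).val ≤ i.val := by
  have key : (Finset.Ioi i).card ≤ (Finset.Ioi (σ a)).card := by
    refine Finset.card_le_card_of_injOn σ (fun c hc => ?_) σ.injective.injOn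
    rw [Finset.mem_coe, Finset.mem_Ioi] at hc ⊢
    exact split_lt h hi ha hc
  rw [Fin.card_Ioi, Fin.card_Ioi] at key
  have h1 := i.isLt
  have h2 := (σ a).isLt
  omega

lemma val_ge_of_gt (h : Avoids312 σ) (hi : σ i = 0) {c : Fin (n + 1)}
    (hc : i < c) : i.val + 1 ≤ (σ c).val := by
  have hc0 : σ c ≠ 0 := fun e => absurd (σ.injective (e.trans hi.symm)) hc.ne'
  have key : (Finset.Iic i).card ≤ (Finset.Iio (σ c)).card := by
    refine Finset.card_le_card_of_injOn σ (fun a ha => ?_) σ.injective.injOn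
    rw [Finset.mem_coe, Finset.mem_Iic] at ha
    rw [Finset.mem_coe, Finset.mem_Iio]
    rcases eq_or_lt_of_le ha with rfl | hlt
    · rw [hi]; exact Fin.pos_iff_ne_zero.mpr hc0
    · exact split_lt h hi hlt hc
  rw [Fin.card_Iic, Fin.card_Iio] at key
  omega

/-- position in `Fin (n+1)` of an index of the first block -/
def pos1 (i : Fin (n + 1)) (a : Fin i.val) : Fin (n + 1) := ⟨a.val, a.isLt.trans i.isLt⟩

/-- position in `Fin (n+1)` of an index of the second block -/
def pos2 (i : Fin (n + 1)) (c : Fin (n - i.val)) : Fin (n + 1) :=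
  ⟨i.val + 1 + c.val, by have := c.isLt; have := i.isLt; omega⟩

lemma pos1_lt (i : Fin (n + 1)) (a : Fin i.val) : pos1 i a < i := by
  simpa [pos1, Fin.lt_def] using a.isLt

lemma pos2_gt (i : Fin (n + 1)) (c : Fin (n - i.val)) : i < pos2 i c := by
  rw [Fin.lt_def]
  show i.val < i.val + 1 + c.val
  omega

lemma pos1_mono {a b : Fin i.val} (hab : a < b) : pos1 i a < pos1 i b := by
  simp only [pos1, Fin.mk_lt_mk]
  exact Fin.lt_def.mp hab

lemma pos2_mono {a b : Fin (n - i.val)} (hab : a < b) : pos2 i a < pos2 i b := by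
  rw [Fin.lt_def] at hab ⊢
  show i.val + 1 + a.val < i.val + 1 + b.val
  omega

private def tf (h : Avoids312 σ) (hi : σ i = 0) : Fin i.val → Fin i.val := fun a =>
  ⟨(σ (pos1 i a)).val - 1, by
    have h1 := val_le_of_lt h hi (pos1_lt i a)
    have h2 := val_pos hi (pos1_lt i a)
    have h3 := a.isLt
    omega⟩

private lemma tf_val (h : Avoids312 σ) (hi : σ i = 0) (a : Fin i.val) :
    (tf h hi a).val = (σ (pos1 i a)).val - 1 := rfl

private lemma tf_inj (h : Avoids312 σ) (hi : σ i = 0) : Function.Injective (tf h hi) := by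
  intro a b e
  have ev := congrArg Fin.val e
  rw [tf_val, tf_val] at ev
  have pa := val_pos hi (pos1_lt i a)
  have pb := val_pos hi (pos1_lt i b)
  have h2 : σ (pos1 i a) = σ (pos1 i b) := Fin.ext (by omega)
  have h3 := congrArg Fin.val (σ.injective h2)
  exact Fin.ext (by simpa [pos1] using h3)

noncomputable def τof (h : Avoids312 σ) (hi : σ i = 0) : Equiv.Perm (Fin i.val) :=
  Equiv.ofBijective (tf h hi) (Finite.injective_iff_bijective.mp (tf_inj h hi))

lemma τof_val (h : Avoids312 σ) (hi : σ i = 0) (a : Fin i.val) :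
    (τof h hi a).val = (σ (pos1 i a)).val - 1 := rfl

lemma τof_avoids (h : Avoids312 σ) (hi : σ i = 0) : Avoids312 (τof h hi) := by
  rintro a b c hab hbc ⟨h1, h2⟩
  have h1v : (τof h hi b).val < (τof h hi c).val := h1
  have h2v : (τof h hi c).val < (τof h hi a).val := h2
  rw [τof_val, τof_val] at h1v
  rw [τof_val, τof_val] at h2v
  have pa := val_pos hi (pos1_lt i a)
  have pb := val_pos hi (pos1_lt i b)
  have pc := val_pos hi (pos1_lt i c)
  exact h (pos1 i a) (pos1 i b) (pos1 i c) (pos1_mono hab) (pos1_mono hbc)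
    ⟨Fin.lt_def.mpr (by omega), Fin.lt_def.mpr (by omega)⟩

private def df (h : Avoids312 σ) (hi : σ i = 0) : Fin (n - i.val) → Fin (n - i.val) := fun c =>
  ⟨(σ (pos2 i c)).val - (i.val + 1), by
    have h1 := val_ge_of_gt h hi (pos2_gt i c)
    have h2 := (σ (pos2 i c)).isLt
    have h3 := c.isLt
    omega⟩

private lemma df_val (h : Avoids312 σ) (hi : σ i = 0) (c : Fin (n - i.val)) :
    (df h hi c).val = (σ (pos2 i c)).val - (i.val + 1) := rfl

private lemma df_inj (h : Avoids312 σ) (hi : σ i = 0) : Function.Injective (df h hi) := by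
  intro a b e
  have ev := congrArg Fin.val e
  rw [df_val, df_val] at ev
  have pa := val_ge_of_gt h hi (pos2_gt i a)
  have pb := val_ge_of_gt h hi (pos2_gt i b)
  have h2 : σ (pos2 i a) = σ (pos2 i b) := Fin.ext (by omega)
  have h3 := congrArg Fin.val (σ.injective h2)
  apply Fin.ext
  have h4 : i.val + 1 + a.val = i.val + 1 + b.val := by simpa [pos2] using h3
  omega

noncomputable def ρof (h : Avoids312 σ) (hi : σ i = 0) : Equiv.Perm (Fin (n - i.val)) :=
  Equiv.ofBijective (df h hi) (Finite.injective_iff_bijective.mp (df_inj h hi))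

lemma ρof_val (h : Avoids312 σ) (hi : σ i = 0) (c : Fin (n - i.val)) :
    (ρof h hi c).val = (σ (pos2 i c)).val - (i.val + 1) := rfl

lemma ρof_avoids (h : Avoids312 σ) (hi : σ i = 0) : Avoids312 (ρof h hi) := by
  rintro a b c hab hbc ⟨h1, h2⟩
  have h1v : (ρof h hi b).val < (ρof h hi c).val := h1
  have h2v : (ρof h hi c).val < (ρof h hi a).val := h2
  rw [ρof_val, ρof_val] at h1v
  rw [ρof_val, ρof_val] at h2v
  have pa := val_ge_of_gt h hi (pos2_gt i a)
  have pb := val_ge_of_gt h hi (pos2_gt i b)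
  have pc := val_ge_of_gt h hi (pos2_gt i c)
  exact h (pos2 i a) (pos2 i b) (pos2 i c) (pos2_mono hab) (pos2_mono hbc)
    ⟨Fin.lt_def.mpr (by omega), Fin.lt_def.mpr (by omega)⟩

/-! ### The backward construction -/

variable (i) in
private def bf (τ : Equiv.Perm (Fin i.val)) (ρ : Equiv.Perm (Fin (n - i.val))) :
    Fin (n + 1) → Fin (n + 1) := fun x =>
  if h1 : x.val < i.val then ⟨(τ ⟨x.val, h1⟩).val + 1, by have := (τ ⟨x.val, h1⟩).isLt; have := i.isLt; omega⟩
  else if h2 : i.val < x.val then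
    ⟨i.val + 1 + (ρ ⟨x.val - (i.val + 1), by have := x.isLt; omega⟩).val, by
      have := (ρ ⟨x.val - (i.val + 1), by have := x.isLt; omega⟩).isLt; omega⟩
  else 0

variable {τ : Equiv.Perm (Fin i.val)} {ρ : Equiv.Perm (Fin (n - i.val))}

private lemma bf_lt_val {x : Fin (n + 1)} (j : Fin i.val) (hj : j.val = x.val) :
    (bf i τ ρ x).val = (τ j).val + 1 := by
  have hx : x.val < i.val := hj ▸ j.isLt
  have hjx : (⟨x.val, hx⟩ : Fin i.val) = j := Fin.ext hj.symm
  simp only [bf]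
  rw [dif_pos hx]
  show (τ ⟨x.val, hx⟩).val + 1 = (τ j).val + 1
  rw [hjx]

private lemma bf_eq_val {x : Fin (n + 1)} (hx : x.val = i.val) : (bf i τ ρ x).val = 0 := by
  simp only [bf]
  rw [dif_neg (by omega), dif_neg (by omega)]
  rfl

private lemma bf_gt_val {x : Fin (n + 1)} (hx : i.val < x.val) (j : Fin (n - i.val))
    (hj : j.val = x.val - (i.val + 1)) :
    (bf i τ ρ x).val = i.val + 1 + (ρ j).val := by
  have hjx : (⟨x.val - (i.val + 1), by have := x.isLt; omega⟩ : Fin (n - i.val)) = j :=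
    Fin.ext hj.symm
  simp only [bf]
  rw [dif_neg (by omega), dif_pos hx]
  show i.val + 1 + (ρ ⟨x.val - (i.val + 1), by have := x.isLt; omega⟩).val = i.val + 1 + (ρ j).val
  rw [hjx]

private lemma bf_lt_val' (x : Fin (n + 1)) (hx : x.val < i.val) :
    (bf i τ ρ x).val = (τ ⟨x.val, hx⟩).val + 1 := bf_lt_val ⟨x.val, hx⟩ rfl

private lemma bf_gt_val' (x : Fin (n + 1)) (hx : i.val < x.val) :
    (bf i τ ρ x).val
      = i.val + 1 + (ρ ⟨x.val - (i.val + 1), by have := x.isLt; omega⟩).val :=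
  bf_gt_val hx ⟨x.val - (i.val + 1), by have := x.isLt; omega⟩ rfl

private lemma bf_inj : Function.Injective (bf i τ ρ) := by
  intro x y e
  have ev := congrArg Fin.val e
  apply Fin.ext
  rcases Nat.lt_trichotomy x.val i.val with hx | hx | hx <;>
    rcases Nat.lt_trichotomy y.val i.val with hy | hy | hy
  · rw [bf_lt_val (τ := τ) (ρ := ρ) ⟨x.val, hx⟩ rfl, bf_lt_val ⟨y.val, hy⟩ rfl] at ev
    have h2 : (⟨x.val, hx⟩ : Fin i.val) = ⟨y.val, hy⟩ := τ.injective (Fin.ext (by omega))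
    simpa using congrArg Fin.val h2
  · rw [bf_lt_val (τ := τ) (ρ := ρ) ⟨x.val, hx⟩ rfl, bf_eq_val hy] at ev; omega
  · rw [bf_lt_val (τ := τ) (ρ := ρ) ⟨x.val, hx⟩ rfl,
      bf_gt_val hy ⟨y.val - (i.val + 1), by have := y.isLt; omega⟩ rfl] at ev
    have := (τ ⟨x.val, hx⟩).isLt
    omega
  · rw [bf_eq_val hx, bf_lt_val ⟨y.val, hy⟩ rfl] at ev; omega
  · omega
  · rw [bf_eq_val hx,
      bf_gt_val hy ⟨y.val - (i.val + 1), by have := y.isLt; omega⟩ rfl] at ev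
    omega
  · rw [bf_gt_val hx ⟨x.val - (i.val + 1), by have := x.isLt; omega⟩ rfl,
      bf_lt_val ⟨y.val, hy⟩ rfl] at ev
    have := (τ ⟨y.val, hy⟩).isLt
    omega
  · rw [bf_gt_val hx ⟨x.val - (i.val + 1), by have := x.isLt; omega⟩ rfl,
      bf_eq_val hy] at ev
    omega
  · rw [bf_gt_val hx ⟨x.val - (i.val + 1), by have := x.isLt; omega⟩ rfl,
      bf_gt_val hy ⟨y.val - (i.val + 1), by have := y.isLt; omega⟩ rfl] at ev
    have h2 : (⟨x.val - (i.val + 1), by have := x.isLt; omega⟩ : Fin (n - i.val))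
        = ⟨y.val - (i.val + 1), by have := y.isLt; omega⟩ := ρ.injective (Fin.ext (by omega))
    have h3 : x.val - (i.val + 1) = y.val - (i.val + 1) := congrArg Fin.val h2
    omega

variable (i τ ρ) in
noncomputable def σof : Equiv.Perm (Fin (n + 1)) :=
  Equiv.ofBijective (bf i τ ρ) (Finite.injective_iff_bijective.mp bf_inj)

lemma σof_val (x : Fin (n + 1)) : (σof i τ ρ x).val = (bf i τ ρ x).val := rfl

lemma σof_zero : σof i τ ρ i = 0 := by
  apply Fin.ext
  rw [σof_val, bf_eq_val rfl]
  rfl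

lemma σof_avoids (hτ : Avoids312 τ) (hρ : Avoids312 ρ) : Avoids312 (σof i τ ρ) := by
  rintro a b c hab hbc ⟨h1, h2⟩
  have h1v : (bf i τ ρ b).val < (bf i τ ρ c).val := h1
  have h2v : (bf i τ ρ c).val < (bf i τ ρ a).val := h2
  have habv : a.val < b.val := hab
  have hbcv : b.val < c.val := hbc
  rcases Nat.lt_trichotomy a.val i.val with hA | hA | hA
  · -- a in first block
    have hCv : c.val < i.val := by
      rcases Nat.lt_trichotomy c.val i.val with hC | hC | hC
      · exact hC
      · exfalso; rw [bf_eq_val (τ := τ) (ρ := ρ) hC] at h1v; omega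
      · exfalso
        rw [bf_gt_val' c hC, bf_lt_val' a hA] at h2v
        have := (τ ⟨a.val, hA⟩).isLt
        omega
    have hBv : b.val < i.val := lt_trans hbcv hCv
    rw [bf_lt_val' b hBv, bf_lt_val' c hCv] at h1v
    rw [bf_lt_val' c hCv, bf_lt_val' a hA] at h2v
    exact hτ ⟨a.val, hA⟩ ⟨b.val, hBv⟩ ⟨c.val, hCv⟩ (Fin.lt_def.mpr habv) (Fin.lt_def.mpr hbcv)
      ⟨Fin.lt_def.mpr (by omega), Fin.lt_def.mpr (by omega)⟩
  · -- a at position i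
    rw [bf_eq_val (τ := τ) (ρ := ρ) hA] at h2v
    omega
  · -- a in last block
    have hBv : i.val < b.val := hA.trans habv
    have hCv : i.val < c.val := hBv.trans hbcv
    rw [bf_gt_val' b hBv, bf_gt_val' c hCv] at h1v
    rw [bf_gt_val' c hCv, bf_gt_val' a hA] at h2v
    exact hρ ⟨a.val - (i.val + 1), by have := a.isLt; omega⟩
      ⟨b.val - (i.val + 1), by have := b.isLt; omega⟩
      ⟨c.val - (i.val + 1), by have := c.isLt; omega⟩
      (Fin.lt_def.mpr (by simp; omega)) (Fin.lt_def.mpr (by simp; omega))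
      ⟨Fin.lt_def.mpr (by omega), Fin.lt_def.mpr (by omega)⟩

/-! ### Counting -/

lemma card_fiber (i : Fin (n + 1)) :
    Fintype.card {σ : Equiv.Perm (Fin (n + 1)) // Avoids312 σ ∧ σ i = 0}
      = Fintype.card {τ : Equiv.Perm (Fin i.val) // Avoids312 τ}
        * Fintype.card {ρ : Equiv.Perm (Fin (n - i.val)) // Avoids312 ρ} := by
  rw [← Fintype.card_prod]
  refine le_antisymm
    (Fintype.card_le_of_injective
      (fun s => (⟨τof s.2.1 s.2.2, τof_avoids s.2.1 s.2.2⟩, ⟨ρof s.2.1 s.2.2, ρof_avoids s.2.1 s.2.2⟩)) ?_)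
    (Fintype.card_le_of_injective
      (fun p => ⟨σof i p.1.1 p.2.1, σof_avoids p.1.2 p.2.2, σof_zero⟩) ?_)
  · rintro ⟨σ1, hσ1, hi1⟩ ⟨σ2, hσ2, hi2⟩ he
    simp only [Prod.mk.injEq, Subtype.mk.injEq] at he
    obtain ⟨hτ, hρ⟩ := he
    apply Subtype.ext
    show σ1 = σ2
    apply Equiv.ext
    intro x
    apply Fin.ext
    rcases Nat.lt_trichotomy x.val i.val with hx | hx | hx
    · have hv := congrArg (fun (e : Equiv.Perm (Fin i.val)) => (e ⟨x.val, hx⟩).val) hτ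
      simp only [τof_val] at hv
      have hpx : pos1 i ⟨x.val, hx⟩ = x := rfl
      rw [hpx] at hv
      have p1 := val_pos hi1 (show x < i from hx)
      have p2 := val_pos hi2 (show x < i from hx)
      omega
    · have hxi : x = i := Fin.ext hx
      rw [hxi, hi1, hi2]
    · have hj : x.val - (i.val + 1) < n - i.val := by have := x.isLt; omega
      have hv := congrArg
        (fun (e : Equiv.Perm (Fin (n - i.val))) => (e ⟨x.val - (i.val + 1), hj⟩).val) hρ
      simp only [ρof_val] at hv
      have hpx : pos2 i ⟨x.val - (i.val + 1), hj⟩ = x := by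
        apply Fin.ext
        show i.val + 1 + (x.val - (i.val + 1)) = x.val
        omega
      rw [hpx] at hv
      have p1 := val_ge_of_gt hσ1 hi1 (show i < x from hx)
      have p2 := val_ge_of_gt hσ2 hi2 (show i < x from hx)
      omega
  · rintro ⟨⟨τ1, h1⟩, ⟨ρ1, h2⟩⟩ ⟨⟨τ2, h3⟩, ⟨ρ2, h4⟩⟩ he
    simp only [Subtype.mk.injEq] at he
    have hv : ∀ x, (bf i τ1 ρ1 x).val = (bf i τ2 ρ2 x).val := fun x => by
      have := congrArg (fun (e : Equiv.Perm (Fin (n + 1))) => (e x).val) he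
      simpa only [σof_val] using this
    have e1 : τ1 = τ2 := by
      apply Equiv.ext
      intro a
      apply Fin.ext
      have hva := hv ⟨a.val, a.isLt.trans i.isLt⟩
      rw [bf_lt_val (τ := τ1) (ρ := ρ1) a rfl, bf_lt_val (τ := τ2) (ρ := ρ2) a rfl] at hva
      omega
    have e2 : ρ1 = ρ2 := by
      apply Equiv.ext
      intro c
      apply Fin.ext
      have hp : i.val + 1 + c.val < n + 1 := by have := c.isLt; have := i.isLt; omega
      have hvc := hv ⟨i.val + 1 + c.val, hp⟩
      have hcx : i.val < (⟨i.val + 1 + c.val, hp⟩ : Fin (n + 1)).val := by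
        show i.val < i.val + 1 + c.val; omega
      have hcj : c.val = (⟨i.val + 1 + c.val, hp⟩ : Fin (n + 1)).val - (i.val + 1) := by
        show c.val = i.val + 1 + c.val - (i.val + 1); omega
      rw [bf_gt_val (τ := τ1) (ρ := ρ1) hcx c hcj,
        bf_gt_val (τ := τ2) (ρ := ρ2) hcx c hcj] at hvc
      omega
    subst e1
    subst e2
    rfl

/-- the counting function -/
noncomputable def g (n : ℕ) : ℕ := Nat.card {σ : Equiv.Perm (Fin n) // Avoids312 σ}

lemma g_zero : g 0 = 1 := by
  have hall : ∀ σ : Equiv.Perm (Fin 0), Avoids312 σ := fun σ a _ _ _ _ => a.elim0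
  rw [g, Nat.card_eq_fintype_card, Fintype.card_congr (Equiv.subtypeUnivEquiv hall)]
  simp [Fintype.card_perm]

lemma g_succ (n : ℕ) : g (n + 1) = ∑ i : Fin (n + 1), g i.val * g (n - i.val) := by
  have E : {σ : Equiv.Perm (Fin (n + 1)) // Avoids312 σ}
      ≃ Σ i : Fin (n + 1), {σ : Equiv.Perm (Fin (n + 1)) // Avoids312 σ ∧ σ i = 0} :=
    (Equiv.sigmaFiberEquiv
      (fun s : {σ : Equiv.Perm (Fin (n + 1)) // Avoids312 σ} => s.1.symm 0)).symm.trans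
    (Equiv.sigmaCongrRight fun i =>
      (Equiv.subtypeSubtypeEquivSubtypeInter
          (fun σ : Equiv.Perm (Fin (n + 1)) => Avoids312 σ)
          (fun σ => σ.symm 0 = i)).trans
        (Equiv.subtypeEquivRight fun σ =>
          and_congr_right fun _ => (Equiv.symm_apply_eq σ).trans eq_comm))
  rw [g, Nat.card_eq_fintype_card]
  calc Fintype.card {σ : Equiv.Perm (Fin (n + 1)) // Avoids312 σ}
      = Fintype.card
        (Σ i : Fin (n + 1), {σ : Equiv.Perm (Fin (n + 1)) // Avoids312 σ ∧ σ i = 0}) :=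
        Fintype.card_congr E
    _ = ∑ i : Fin (n + 1),
          Fintype.card {σ : Equiv.Perm (Fin (n + 1)) // Avoids312 σ ∧ σ i = 0} :=
        Fintype.card_sigma
    _ = ∑ i : Fin (n + 1), g i.val * g (n - i.val) := by
        refine Finset.sum_congr rfl fun i _ => ?_
        rw [card_fiber, g, g, Nat.card_eq_fintype_card, Nat.card_eq_fintype_card]

end Avoids312Aux

/-- The number of 312-avoiding permutations in `S_n` equals the Catalan number `C_n`. -/
theorem card_avoids312_eq_catalan (n : ℕ) :
    Nat.card {σ : Equiv.Perm (Fin n) // Avoids312 σ} = catalan n := by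
  induction n using Nat.strong_induction_on with
  | _ n ih =>
    obtain _ | m := n
    · rw [catalan_zero]
      exact Avoids312Aux.g_zero
    · have h := Avoids312Aux.g_succ m
      rw [show Nat.card {σ : Equiv.Perm (Fin (m + 1)) // Avoids312 σ} = Avoids312Aux.g (m + 1) from rfl,
        h, catalan_succ]
      refine Finset.sum_congr rfl fun i _ => ?_
      have e1 : Avoids312Aux.g i.val = catalan i.val := ih i.val i.isLt
      have e2 : Avoids312Aux.g (m - i.val) = catalan (m - i.val) := ih (m - i.val) (by have := i.isLt; omega)
      rw [e1, e2]
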